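/- Let x ∈ gl₆(𝕂) be the matrix whose only nonzero entries are x₁₁ at position (1,1), x₂₃ at position (2,3), x₃₂ at position (3,2), and 1 at positions (4,5), (5,4), (6,6), where x₁₁, x₂₃, x₃₂ ∈ 𝕂 are nonzero and x₂₃ ≠ x₃₂. Then there exist unipotent elements g₁, g₂ ∈ S (i.e., gᵢ − I₆ is nilpotent) such that g₁·x·g₂^τ = x and χ_S(g₁)·χ_S(g₂) ≠ 1. -/

import Mathlib

open Matrix

/-- Assembles a `3 × 3` grid of `2 × 2` blocks into a `6 × 6` matrix. -/
def asm {𝕂 : Type*} [RCLike 𝕂] (m : Matrix (Fin 3) (Fin 3) (Matrix (Fin 2) (Fin 2) 𝕂)) :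
    Matrix (Fin 6) (Fin 6) 𝕂 :=
  Matrix.of fun i j =>
    m ⟨(i : ℕ) / 2, by have := i.2; omega⟩ ⟨(j : ℕ) / 2, by have := j.2; omega⟩
      ⟨(i : ℕ) % 2, by omega⟩ ⟨(j : ℕ) % 2, by omega⟩

/-- The subgroup `S ⊆ GL₆(𝕂)` of matrices of the block form `[[a,b,d],[0,a,c],[0,0,a]]`
with `a ∈ GL₂(𝕂)` and `b, c, d ∈ gl₂(𝕂)`. -/
def Sgrp (𝕂 : Type*) [RCLike 𝕂] : Set (Matrix (Fin 6) (Fin 6) 𝕂) :=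
  {s | ∃ a b c d : Matrix (Fin 2) (Fin 2) 𝕂, IsUnit a.det ∧
    s = asm !![a, b, d; 0, a, c; 0, 0, a]}

/-- The `2 × 2` block of a `6 × 6` matrix at block position `(k, l)`. -/
def blk {𝕂 : Type*} [RCLike 𝕂] (k l : Fin 3) (s : Matrix (Fin 6) (Fin 6) 𝕂) :
    Matrix (Fin 2) (Fin 2) 𝕂 :=
  Matrix.of fun i j =>
    s ⟨2 * (k : ℕ) + (i : ℕ), by have := k.2; have := i.2; omega⟩
      ⟨2 * (l : ℕ) + (j : ℕ), by have := l.2; have := j.2; omega⟩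

open Classical in
/-- The character `χ_S` of `S`, built from a character `χ` of `𝕂ˣ` and an additive
character `ψ` of `𝕂`:  on `s = [[a,b,d],[0,a,c],[0,0,a]]` its value is
`χ(det a)·ψ(tr((b+c)·a⁻¹))`. -/
noncomputable def chiS {𝕂 : Type*} [RCLike 𝕂] (χ : 𝕂ˣ →* ℂˣ) (ψ : 𝕂 → ℂ)
    (s : Matrix (Fin 6) (Fin 6) 𝕂) : ℂ :=
  if h : IsUnit (blk 0 0 s).det then
    (χ h.unit : ℂ) * ψ (Matrix.trace ((blk 0 1 s + blk 1 2 s) * (blk 0 0 s)⁻¹))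
  else 0

set_option maxHeartbeats 4000000

def Xm {𝕂 : Type*} [RCLike 𝕂] (a b c : 𝕂) : Matrix (Fin 6) (Fin 6) 𝕂 :=
  a • Matrix.single 0 0 (1 : 𝕂) + b • Matrix.single 1 2 (1 : 𝕂)
    + c • Matrix.single 2 1 (1 : 𝕂) + Matrix.single 3 4 (1 : 𝕂)
    + Matrix.single 4 3 (1 : 𝕂) + Matrix.single 5 5 (1 : 𝕂)

lemma stdB_apply {n α : Type*} [DecidableEq n] [Zero α] (i j i' j' : n) (c : α) :
    Matrix.single i j c i' j' = if i = i' ∧ j = j' then c else 0 := rfl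

lemma chiS_det_one {𝕂 : Type*} [RCLike 𝕂] (χ : 𝕂ˣ →* ℂˣ) (ψ : 𝕂 → ℂ)
    (s : Matrix (Fin 6) (Fin 6) 𝕂) (hdet : (blk 0 0 s).det = 1) :
    chiS χ ψ s = ψ (Matrix.trace ((blk 0 1 s + blk 1 2 s) * (blk 0 0 s)⁻¹)) := by
  have hu : IsUnit (blk 0 0 s).det := hdet ▸ isUnit_one
  rw [chiS, dif_pos hu]
  have h1 : hu.unit = 1 := Units.ext (by rw [IsUnit.unit_spec, hdet, Units.val_one])
  rw [h1, _root_.map_one, Units.val_one, one_mul]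

lemma z64aux {𝕂 : Type*} [RCLike 𝕂] (ψ : 𝕂 → ℂ) (hψ0 : ψ 0 = 1) (χ : 𝕂ˣ →* ℂˣ)
    (x11 x23 x32 : 𝕂) (h32 : x32 ≠ 0) (hsum : x11 + x32 ≠ 0) (t : 𝕂) (ht : ψ t ≠ 1) :
    ∃ g₁ ∈ Sgrp 𝕂, ∃ g₂ ∈ Sgrp 𝕂, IsNilpotent (g₁ - 1) ∧ IsNilpotent (g₂ - 1) ∧
      g₁ * Xm x11 x23 x32 * g₂ᵀ = Xm x11 x23 x32 ∧ chiS χ ψ g₁ * chiS χ ψ g₂ ≠ 1 := by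
  set r : 𝕂 := -t * x32 / (x11 + x32) with hr
  set β : 𝕂 := -(x11 * r) / x32 with hβ
  set g₁ : Matrix (Fin 6) (Fin 6) 𝕂 :=
    1 + Matrix.single 0 2 β + Matrix.single 1 4 (-(x23 * r)) + Matrix.single 3 5 (-r)
    with hg1
  set g₂ : Matrix (Fin 6) (Fin 6) 𝕂 :=
    1 + Matrix.single 1 0 r + Matrix.single 3 2 r + Matrix.single 5 4 r with hg2
  have hmem1 : g₁ ∈ Sgrp 𝕂 := by
    refine ⟨1, !![β,0;0,0], !![0,0;0,-r], !![0,0;-(x23*r),0], by simp, ?_⟩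
    ext i j
    fin_cases i <;> fin_cases j <;>
      simp only [hg1, asm, Matrix.of_apply, Matrix.add_apply, stdB_apply, Matrix.one_apply,
        Fin.ext_iff] <;>
      norm_num
  have hmem2 : g₂ ∈ Sgrp 𝕂 := by
    refine ⟨!![1,0;r,1], 0, 0, 0, by simp [Matrix.det_fin_two_of], ?_⟩
    ext i j
    fin_cases i <;> fin_cases j <;>
      simp only [hg2, asm, Matrix.of_apply, Matrix.add_apply, stdB_apply, Matrix.one_apply,
        Fin.ext_iff] <;>
      norm_num
  have hnil1 : IsNilpotent (g₁ - 1) := by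
    refine ⟨2, ?_⟩
    rw [pow_two]
    ext i j
    fin_cases i <;> fin_cases j <;>
      simp [hg1, Matrix.mul_apply, Matrix.sub_apply, Matrix.one_apply,
        stdB_apply, Fin.sum_univ_six]
  have hnil2 : IsNilpotent (g₂ - 1) := by
    refine ⟨2, ?_⟩
    rw [pow_two]
    ext i j
    fin_cases i <;> fin_cases j <;>
      simp [hg2, Matrix.mul_apply, Matrix.sub_apply, Matrix.one_apply,
        stdB_apply, Fin.sum_univ_six]
  have hprod : g₁ * Xm x11 x23 x32 * g₂ᵀ = Xm x11 x23 x32 := by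
    ext i j
    fin_cases i <;> fin_cases j <;>
      simp [hg1, hg2, Xm, Matrix.mul_apply, Matrix.transpose_apply, Matrix.one_apply,
        stdB_apply, Fin.sum_univ_six, hβ] <;>
      field_simp <;> ring
  have hb00 : blk 0 0 g₁ = 1 := by
    ext i j
    fin_cases i <;> fin_cases j <;>
      simp [hg1, blk, stdB_apply, Matrix.one_apply]
  have hb01 : blk 0 1 g₁ = !![β,0;0,0] := by
    ext i j
    fin_cases i <;> fin_cases j <;>
      simp [hg1, blk, stdB_apply, Matrix.one_apply] <;> rfl
  have hb12 : blk 1 2 g₁ = !![0,0;0,-r] := by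
    ext i j
    fin_cases i <;> fin_cases j <;>
      simp [hg1, blk, stdB_apply, Matrix.one_apply] <;> rfl
  have hc00 : blk 0 0 g₂ = !![1,0;r,1] := by
    ext i j
    fin_cases i <;> fin_cases j <;>
      simp [hg2, blk, stdB_apply, Matrix.one_apply] <;> rfl
  have hc01 : blk 0 1 g₂ = 0 := by
    ext i j
    fin_cases i <;> fin_cases j <;>
      simp [hg2, blk, stdB_apply, Matrix.one_apply]
  have hc12 : blk 1 2 g₂ = 0 := by
    ext i j
    fin_cases i <;> fin_cases j <;>
      simp [hg2, blk, stdB_apply, Matrix.one_apply]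
  have hchi1 : chiS χ ψ g₁ = ψ t := by
    rw [chiS_det_one χ ψ g₁ (by rw [hb00, Matrix.det_one]), hb00, hb01, hb12, inv_one,
      mul_one]
    congr 1
    have htr : Matrix.trace (!![β,0;0,0] + !![0,0;0,-r]) = β + -r := by
      simp [Matrix.trace, Fin.sum_univ_two]
    rw [htr, hβ, hr]
    field_simp
  have hchi2 : chiS χ ψ g₂ = 1 := by
    rw [chiS_det_one χ ψ g₂ (by rw [hc00]; simp [Matrix.det_fin_two_of]), hc01, hc12]
    simpa using hψ0
  exact ⟨g₁, hmem1, g₂, hmem2, hnil1, hnil2, hprod, by rw [hchi1, hchi2, mul_one]; exact ht⟩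

set_option maxHeartbeats 4000000 in
/-- Let `x` be the `6 × 6` matrix with (1-indexed) nonzero entries `x₁₁`, `x₂₃`, `x₃₂`
and `1` at positions `(4,5)`, `(5,4)`, `(6,6)`.  If `x₂₃ ≠ x₃₂`, then there are
unipotent `g₁, g₂ ∈ S` with `g₁·x·g₂^τ = x` and `χ_S(g₁)·χ_S(g₂) ≠ 1`. -/
theorem z64_unipotent_incompatibility {𝕂 : Type*} [RCLike 𝕂]
    (ψ : 𝕂 → ℂ) (hψ_add : ∀ s t, ψ (s + t) = ψ s * ψ t) (hψ_unitary : ∀ t, ‖ψ t‖ = 1)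
    (hψ_cont : Continuous ψ) (hψ_nontriv : ∃ t, ψ t ≠ 1)
    (χ : 𝕂ˣ →* ℂˣ)
    (x11 x23 x32 : 𝕂) (h11 : x11 ≠ 0) (h23 : x23 ≠ 0) (h32 : x32 ≠ 0)
    (hne : x23 ≠ x32)
    (x : Matrix (Fin 6) (Fin 6) 𝕂)
    (hx : x = x11 • Matrix.single 0 0 (1 : 𝕂) + x23 • Matrix.single 1 2 (1 : 𝕂)
      + x32 • Matrix.single 2 1 (1 : 𝕂) + Matrix.single 3 4 (1 : 𝕂)
      + Matrix.single 4 3 (1 : 𝕂) + Matrix.single 5 5 (1 : 𝕂)) :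
    ∃ g₁ ∈ Sgrp 𝕂, ∃ g₂ ∈ Sgrp 𝕂, IsNilpotent (g₁ - 1) ∧ IsNilpotent (g₂ - 1) ∧
      g₁ * x * g₂ᵀ = x ∧ chiS χ ψ g₁ * chiS χ ψ g₂ ≠ 1 := by
  obtain ⟨t, ht⟩ := hψ_nontriv
  have hψ0 : ψ 0 = 1 := by
    have h := hψ_add 0 0
    rw [add_zero] at h
    have hne0 : ψ 0 ≠ 0 := by
      intro h0
      have h1 := hψ_unitary 0
      rw [h0] at h1
      simp at h1
    exact (mul_left_cancel₀ hne0 (by rw [mul_one, ← h])).symm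
  have hx' : x = Xm x11 x23 x32 := by rw [hx]; rfl
  rcases eq_or_ne (x11 + x32) 0 with hs | hs
  · have hs' : x11 + x23 ≠ 0 := by
      intro h'
      exact hne (by linear_combination h' - hs)
    obtain ⟨g₁, hg₁, g₂, hg₂, n₁, n₂, heq, hchi⟩ := z64aux ψ hψ0 χ x11 x32 x23 h23 hs' t ht
    refine ⟨g₂, hg₂, g₁, hg₁, n₂, n₁, ?_, ?_⟩
    · have hT : (Xm x11 x32 x23)ᵀ = Xm x11 x23 x32 := by
        ext i j
        fin_cases i <;> fin_cases j <;>
          simp [Xm, stdB_apply, Matrix.transpose_apply]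
      have h2 := congrArg Matrix.transpose heq
      rw [Matrix.transpose_mul, Matrix.transpose_mul, Matrix.transpose_transpose, hT] at h2
      rw [hx', mul_assoc]
      exact h2
    · rw [mul_comm]
      exact hchi
  · rw [hx']
    exact z64aux ψ hψ0 χ x11 x23 x32 h32 hs t ht
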